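/- For every positive integer n and every integer i, the ℤ[U]-module map D⁺_{−n,i} : 𝔸⁺_i → 𝔹⁺_i (here the surgery coefficient is −n, so D⁺_{−n,i}({a_s}) = {b_s} with b_s = v_s(a_s) + h_{s+n}(a_{s+n}), the index s ranging over integers congruent to i modulo n) is injective, and its cokernel is isomorphic to T as a ℤ[U]-module. -/

import Mathlib

noncomputable section

/-- The `ℤ[U]`-module `T = ℤ[U,U⁻¹]/(U·ℤ[U])`, modelled as finitely supported functions
`ℕ →₀ ℤ`, where the value at `j` is the coefficient of `U^{-j}`. -/
abbrev TT : Type := ℕ →₀ ℤ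

/-- The action of `U` on `T` : `U·U^{-j} = U^{-(j-1)}` for `j ≥ 1` and `U·U^0 = 0`. -/
def UT : AddMonoid.End TT :=
  Finsupp.liftAddHom fun j => if j = 0 then 0 else Finsupp.singleAddHom (j - 1)

/-- The map `v_s : T → T`: the identity if `s ≥ 0`, multiplication by `U^{-s}` if `s ≤ 0`. -/
def vT (s : ℤ) : AddMonoid.End TT := if 0 ≤ s then 1 else UT ^ (-s).toNat

/-- The map `h_s : T → T`: multiplication by `U^{s}` if `s ≥ 0`, the identity if `s ≤ 0`. -/
def hT (s : ℤ) : AddMonoid.End TT := if 0 ≤ s then UT ^ s.toNat else 1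

/-- The index set of integers congruent to `i` modulo `n`. -/
def Idx (n i : ℤ) : Type := {s : ℤ // n ∣ s - i}

instance (n i : ℤ) : DecidableEq (Idx n i) := Subtype.instDecidableEq

/-- `𝔸⁺_i = 𝔹⁺_i = ⊕_{s ≡ i (mod n)} T_s`. -/
abbrev ABt (n i : ℤ) : Type := Π₀ _ : Idx n i, TT

/-- Shifting the index by `n`. -/
def idxAdd (n i : ℤ) (s : Idx n i) : Idx n i :=
  ⟨s.1 + n, by obtain ⟨c, hc⟩ := s.2; exact ⟨c + 1, by rw [show s.1 + n - i = s.1 - i + n by ring, hc]; ring⟩⟩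

/-- Shifting the index by `-n`. -/
def idxSub (n i : ℤ) (s : Idx n i) : Idx n i :=
  ⟨s.1 - n, by obtain ⟨c, hc⟩ := s.2; exact ⟨c - 1, by rw [show s.1 - n - i = s.1 - i - n by ring, hc]; ring⟩⟩

/-- The map `D⁺_{n,i} : 𝔸⁺_i → 𝔹⁺_i`, `(D⁺_{n,i} a)_s = v_s(a_s) + h_{s-n}(a_{s-n})`. -/
def Dpos (n i : ℤ) : ABt n i →+ ABt n i :=
  DFinsupp.sumAddHom fun s =>
    ((DFinsupp.singleAddHom (fun _ : Idx n i => TT) s).comp (vT s.1)) +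
    ((DFinsupp.singleAddHom (fun _ : Idx n i => TT) (idxAdd n i s)).comp (hT s.1))

/-- The map `D⁺_{-n,i} : 𝔸⁺_i → 𝔹⁺_i`, `(D⁺_{-n,i} a)_s = v_s(a_s) + h_{s+n}(a_{s+n})`. -/
def Dneg (n i : ℤ) : ABt n i →+ ABt n i :=
  DFinsupp.sumAddHom fun s =>
    ((DFinsupp.singleAddHom (fun _ : Idx n i => TT) s).comp (vT s.1)) +
    ((DFinsupp.singleAddHom (fun _ : Idx n i => TT) (idxSub n i s)).comp (hT s.1))

/-- The `U`-action on `𝔸⁺_i = 𝔹⁺_i`, acting as `U` on each summand. -/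
def UAB (n i : ℤ) : AddMonoid.End (ABt n i) :=
  DFinsupp.sumAddHom fun s => (DFinsupp.singleAddHom (fun _ : Idx n i => TT) s).comp UT

/-- `ε(s,n)` for `n > 0`: writing `s = σ + kn` with `0 ≤ σ < n`,
`ε(s,n) = kσ + k(k-1)n/2` for `k ≥ 0` and `(k+1)σ + k(k+1)n/2` for `k < 0`. -/
def epsZ (s n : ℤ) : ℤ :=
  if 0 ≤ s.ediv n then
    s.ediv n * s.emod n + (s.ediv n * (s.ediv n - 1)).ediv 2 * n
  else
    (s.ediv n + 1) * s.emod n + (s.ediv n * (s.ediv n + 1)).ediv 2 * n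

/-! ### Auxiliary material for the proof -/

section Aux

/-- Shift-up operator on `TT`, a section of `UT`. -/
def SU : AddMonoid.End TT := Finsupp.mapDomain.addMonoidHom (· + 1)

lemma UT_single (j : ℕ) (c : ℤ) :
    UT (Finsupp.single j c) = if j = 0 then 0 else Finsupp.single (j - 1) c := by
  show (Finsupp.liftAddHom fun j => if j = 0 then (0 : ℤ →+ TT) else Finsupp.singleAddHom (j - 1)) (Finsupp.single j c) = _
  rw [Finsupp.liftAddHom_apply_single]
  split <;> simp [Finsupp.singleAddHom]

lemma UT_SU (x : TT) : UT (SU x) = x := by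
  have h : (UT : TT →+ TT).comp (SU : TT →+ TT) = AddMonoidHom.id TT := by
    apply Finsupp.addHom_ext; intro j c
    show UT (Finsupp.mapDomain (· + 1) (Finsupp.single j c)) = Finsupp.single j c
    rw [Finsupp.mapDomain_single, UT_single]; simp
  exact DFunLike.congr_fun h x

lemma UT_surj : Function.Surjective (UT : AddMonoid.End TT) := fun x => ⟨SU x, UT_SU x⟩

lemma UTpow_surj (m : ℕ) : Function.Surjective ((UT ^ m : AddMonoid.End TT) : TT → TT) := by
  induction m with
  | zero => intro x; exact ⟨x, rfl⟩
  | succ m ih =>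
    intro x
    obtain ⟨y, hy⟩ := ih x
    exact ⟨SU y, by rw [pow_succ]; show (UT ^ m) (UT (SU y)) = x; rw [UT_SU, hy]⟩

lemma vT_eq (s : ℤ) : vT s = UT ^ (-s).toNat := by
  rw [vT]; split
  · rw [Int.toNat_of_nonpos (by linarith), pow_zero]
  · rfl

lemma hT_eq (s : ℤ) : hT s = UT ^ s.toNat := by
  rw [hT]; split
  · rfl
  · rw [Int.toNat_of_nonpos (by linarith), pow_zero]

lemma vT_surj (s : ℤ) : Function.Surjective (vT s : TT → TT) := by
  rw [vT_eq]; exact UTpow_surj _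

lemma hT_surj (s : ℤ) : Function.Surjective (hT s : TT → TT) := by
  rw [hT_eq]; exact UTpow_surj _

/-! ### Integral arithmetic: the exponent function -/

/-- The exponent function `eps n s = (s(s+n) - σ(σ-n))/(2n)` where `σ = s % n`. -/
def epsN (n s : ℤ) : ℕ := ((s * (s + n) - s % n * (s % n - n)) / (2 * n)).toNat

lemma num_spec (n s : ℤ) (hn : 0 < n) :
    ∃ w : ℤ, 0 ≤ w ∧ s * (s + n) - s % n * (s % n - n) = 2 * n * w := by
  obtain ⟨c, hc⟩ := Int.even_mul_succ_self (s / n)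
  set σ := s % n with hσ
  set k := s / n with hk
  have hs : σ + n * k = s := Int.emod_add_mul_ediv s n
  have hσ0 : 0 ≤ σ := Int.emod_nonneg s (ne_of_gt hn)
  have hσn : σ < n := Int.emod_lt_of_pos s hn
  refine ⟨(k + 1) * σ + n * c, ?_, ?_⟩
  · rcases le_or_gt 0 k with hk0 | hk0
    · have hc0 : 0 ≤ c := by nlinarith
      nlinarith
    · have hk1 : k ≤ -1 := by omega
      have h2 : 0 ≤ (k + 1) * (2 * σ + n * k) := by
        rcases eq_or_lt_of_le hk1 with h | h
        · rw [h]; norm_num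
        · have hk2 : k ≤ -2 := by omega
          have hA : 0 ≤ -(k + 1) := by linarith
          have hB : 0 ≤ -(2 * σ + n * k) := by nlinarith
          nlinarith [mul_nonneg hA hB]
      nlinarith
  · linear_combination (s + σ + n * k + n) * hs.symm + n ^ 2 * hc

lemma epsN_spec (n s : ℤ) (hn : 0 < n) :
    ∃ w : ℤ, 0 ≤ w ∧ s * (s + n) - s % n * (s % n - n) = 2 * n * w ∧ (epsN n s : ℤ) = w := by
  obtain ⟨w, hw0, hw⟩ := num_spec n s hn
  refine ⟨w, hw0, hw, ?_⟩
  rw [epsN, hw, Int.mul_ediv_cancel_left _ (by positivity), Int.toNat_of_nonneg hw0]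

lemma sub_emod_self (n s : ℤ) : (s - n) % n = s % n := by
  rw [Int.sub_emod, Int.emod_self, sub_zero, Int.emod_emod_of_dvd _ dvd_rfl]

lemma epsN_key (n s : ℤ) (hn : 0 < n) :
    epsN n (s - n) + s.toNat = epsN n s + (-s).toNat := by
  obtain ⟨w1, h1, e1, f1⟩ := epsN_spec n (s - n) hn
  obtain ⟨w2, h2, e2, f2⟩ := epsN_spec n s hn
  have hnum : s * (s + n) - s % n * (s % n - n)
      = ((s - n) * ((s - n) + n) - (s - n) % n * ((s - n) % n - n)) + 2 * n * s := by
    rw [sub_emod_self]; ring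
  have hw : w2 = w1 + s := by
    have : 2 * n * w2 = 2 * n * (w1 + s) := by rw [← e2, hnum, e1]; ring
    exact mul_left_cancel₀ (by positivity) this
  omega

lemma ediv_sub_self (n s : ℤ) (hn : 0 < n) : (s - n) / n = s / n - 1 := by
  rw [show s - n = s + (-1) * n by ring, Int.add_mul_ediv_right _ _ (ne_of_gt hn)]; ring

/-! ### The sign-twisted evaluation map -/

/-- The coefficient endomorphism `(-1)^{s/n} U^{ε(s)}`. -/
def Fco (n i : ℤ) (s : Idx n i) : AddMonoid.End TT :=
  if Even (s.1 / n) then UT ^ epsN n s.1 else -(UT ^ epsN n s.1)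

lemma pow_apply_key (a b c d : ℕ) (x : TT) (h : a + b = c + d) :
    (UT ^ a) ((UT ^ b) x) = (UT ^ c) ((UT ^ d) x) := by
  show (UT ^ a * UT ^ b) x = (UT ^ c * UT ^ d) x
  rw [← pow_add, ← pow_add, h]

lemma P1 (n i : ℤ) (hn : 0 < n) (s : Idx n i) (x : TT) :
    Fco n i (idxSub n i s) (hT s.1 x) = -(Fco n i s (vT s.1 x)) := by
  have hv : (idxSub n i s).1 = s.1 - n := rfl
  rw [Fco, Fco, hT_eq, vT_eq, hv, ediv_sub_self n s.1 hn]
  by_cases h : Even (s.1 / n)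
  · rw [if_pos h, if_neg (by simp [Int.even_sub_one, h])]
    show -((UT ^ epsN n (s.1 - n)) ((UT ^ (s.1).toNat) x))
        = -((UT ^ epsN n s.1) ((UT ^ (-s.1).toNat) x))
    rw [pow_apply_key _ _ _ _ x (epsN_key n s.1 hn)]
  · rw [if_neg h, if_pos (by simp [Int.even_sub_one, h, Int.not_even_iff_odd.mp h])]
    show (UT ^ epsN n (s.1 - n)) ((UT ^ (s.1).toNat) x)
        = -(-((UT ^ epsN n s.1) ((UT ^ (-s.1).toNat) x)))
    rw [neg_neg, pow_apply_key _ _ _ _ x (epsN_key n s.1 hn)]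

lemma Fco_UT (n i : ℤ) (s : Idx n i) (x : TT) :
    Fco n i s (UT x) = UT (Fco n i s x) := by
  have key : ∀ m : ℕ, (UT ^ m) (UT x) = UT ((UT ^ m) x) := by
    intro m
    show (UT ^ m * UT) x = (UT * UT ^ m) x
    rw [← pow_succ, ← pow_succ']
  rw [Fco]
  split
  · exact key _
  · show -((UT ^ epsN n s.1) (UT x)) = UT (-((UT ^ epsN n s.1) x))
    rw [key, map_neg]

/-- The evaluation map `F : 𝔹 → T`. -/
def FF (n i : ℤ) : ABt n i →+ TT :=
  DFinsupp.sumAddHom fun s => (Fco n i s : TT →+ TT)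

lemma FF_single (n i : ℤ) (t : Idx n i) (x : TT) :
    FF n i (DFinsupp.single t x) = Fco n i t x :=
  DFinsupp.sumAddHom_single _ _ _

lemma Dneg_single (n i : ℤ) (s : Idx n i) (x : TT) :
    Dneg n i (DFinsupp.single s x)
      = DFinsupp.single s (vT s.1 x) + DFinsupp.single (idxSub n i s) (hT s.1 x) := by
  rw [Dneg, DFinsupp.sumAddHom_single]; rfl

lemma UAB_single (n i : ℤ) (t : Idx n i) (x : TT) :
    UAB n i (DFinsupp.single t x) = DFinsupp.single t (UT x) := by
  exact DFinsupp.sumAddHom_single _ _ _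

lemma idxAdd_ne (n i : ℤ) (hn : 0 < n) (t : Idx n i) : idxAdd n i t ≠ t := by
  intro h
  have := congrArg Subtype.val h
  simp only [idxAdd] at this
  omega

lemma idxSub_ne (n i : ℤ) (hn : 0 < n) (t : Idx n i) : idxSub n i t ≠ t := by
  intro h
  have := congrArg Subtype.val h
  simp only [idxSub] at this
  omega

lemma idxAdd_sub (n i : ℤ) (t : Idx n i) : idxAdd n i (idxSub n i t) = t := by
  apply Subtype.ext; show t.1 - n + n = t.1; ring

lemma idxSub_add (n i : ℤ) (t : Idx n i) : idxSub n i (idxAdd n i t) = t := by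
  apply Subtype.ext; show t.1 + n - n = t.1; ring

@[simp] lemma idxAdd_val (n i : ℤ) (t : Idx n i) : (idxAdd n i t).1 = t.1 + n := rfl
@[simp] lemma idxSub_val (n i : ℤ) (t : Idx n i) : (idxSub n i t).1 = t.1 - n := rfl

lemma Dneg_apply (n i : ℤ) (hn : 0 < n) (a : ABt n i) (t : Idx n i) :
    Dneg n i a t = vT t.1 (a t) + hT (t.1 + n) (a (idxAdd n i t)) := by
  have heval : ∀ (u : Idx n i) (f : ABt n i),
      (DFinsupp.evalAddMonoidHom (β := fun _ : Idx n i => TT) u) f = f u := fun _ _ => rfl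
  have h : (DFinsupp.evalAddMonoidHom (β := fun _ : Idx n i => TT) t).comp (Dneg n i)
      = ((vT t.1 : TT →+ TT).comp (DFinsupp.evalAddMonoidHom t)
        + (hT (t.1 + n) : TT →+ TT).comp (DFinsupp.evalAddMonoidHom (idxAdd n i t))) := by
    apply DFinsupp.addHom_ext; intro s x
    simp only [AddMonoidHom.comp_apply, AddMonoidHom.add_apply, heval, Dneg_single,
      DFinsupp.add_apply]
    show _ = vT t.1 ((DFinsupp.single s x : ABt n i) t)
      + hT (t.1 + n) ((DFinsupp.single s x : ABt n i) (idxAdd n i t))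
    rcases eq_or_ne s t with h1 | h1
    · subst h1
      have h2 : idxSub n i s ≠ s := idxSub_ne n i hn s
      have h3 : s ≠ idxAdd n i s := (idxAdd_ne n i hn s).symm
      simp [DFinsupp.single_apply, h2, h3]
    · rcases eq_or_ne s (idxAdd n i t) with h2 | h2
      · subst h2
        have h4 : idxSub n i (idxAdd n i t) = t := idxSub_add n i t
        have h5 : idxAdd n i t ≠ t := h1
        simp [DFinsupp.single_apply, h4, h5]
      · have h3 : idxSub n i s ≠ t := by
          intro h; apply h2; rw [← idxAdd_sub n i s, h]
        simp [DFinsupp.single_apply, h1, h2, h3]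
  have := DFunLike.congr_fun h a
  simp only [AddMonoidHom.comp_apply, AddMonoidHom.add_apply, heval] at this
  exact this

/-! ### Injectivity -/

lemma Dneg_injective (n i : ℤ) (hn : 0 < n) : Function.Injective (Dneg n i) := by
  rw [injective_iff_map_eq_zero]
  intro a ha
  by_contra h0
  have hne : a.support.Nonempty := by
    rw [Finset.nonempty_iff_ne_empty]
    intro h
    exact h0 (DFinsupp.support_eq_empty.1 h)
  obtain ⟨t0, ht0, hmax⟩ := a.support.exists_max_image (fun t => t.1) hne
  obtain ⟨t1, ht1, hmin⟩ := a.support.exists_min_image (fun t => t.1) hne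
  have hcomp : ∀ t : Idx n i, vT t.1 (a t) + hT (t.1 + n) (a (idxAdd n i t)) = 0 := by
    intro t
    rw [← Dneg_apply n i hn a t, ha]
    rfl
  have htop : t0.1 < 0 := by
    by_contra hge
    push_neg at hge
    have hI : a (idxAdd n i t0) = 0 := by
      by_contra hne'
      have hmem : idxAdd n i t0 ∈ a.support := DFinsupp.mem_support_iff.2 hne'
      have := hmax _ hmem
      simp only [idxAdd_val] at this
      omega
    have hc := hcomp t0
    rw [hI, map_zero, add_zero, vT, if_pos hge] at hc
    exact (DFinsupp.mem_support_iff.1 ht0) hc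
  have hchain : ∀ m : ℕ, ∃ t : Idx n i, t.1 = t0.1 - m * n ∧ a t ≠ 0 := by
    intro m
    induction m with
    | zero => exact ⟨t0, by simp, DFinsupp.mem_support_iff.1 ht0⟩
    | succ m ih =>
      obtain ⟨t, htv, hta⟩ := ih
      have hmn : 0 ≤ (m : ℤ) * n := by positivity
      have htneg : t.1 < 0 := by omega
      refine ⟨idxSub n i t, by simp [htv]; push_cast; ring, ?_⟩
      have hc := hcomp (idxSub n i t)
      rw [idxAdd_sub] at hc
      have hval : (idxSub n i t).1 + n = t.1 := by simp
      rw [hval, hT, if_neg (by omega)] at hc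
      intro h0'
      rw [h0', map_zero, zero_add] at hc
      exact hta hc
  obtain ⟨t, htv, hta⟩ := hchain ((t0.1 - t1.1).toNat + 1)
  have hmem : t ∈ a.support := DFinsupp.mem_support_iff.2 hta
  have h1 := hmin t hmem
  have h2 := hmin t0 ht0
  set M : ℕ := (t0.1 - t1.1).toNat + 1 with hM
  have hMn : (M : ℤ) * 1 ≤ (M : ℤ) * n := by
    apply mul_le_mul_of_nonneg_left (by omega) (by positivity)
  have hM2 : ((t0.1 - t1.1).toNat : ℤ) = t0.1 - t1.1 := Int.toNat_of_nonneg (by omega)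
  have : (M : ℤ) = t0.1 - t1.1 + 1 := by push_cast [hM]; omega
  omega

/-! ### The quotient -/

/-- The base index, at which `ε` vanishes. -/
def sstar (n i : ℤ) : Idx n i :=
  ⟨i % n - n, ⟨-(i / n) - 1, by have h := Int.emod_add_mul_ediv i n; linear_combination h⟩⟩

lemma epsN_sstar (n i : ℤ) (hn : 0 < n) : epsN n (sstar n i).1 = 0 := by
  have hval : (sstar n i).1 = i % n - n := rfl
  have hmod : (i % n - n) % n = i % n := by
    rw [sub_emod_self, Int.emod_emod_of_dvd _ dvd_rfl]
  rw [epsN, hval, hmod, show (i % n - n) * (i % n - n + n) - i % n * (i % n - n) = 0 by ring]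
  simp

lemma ediv_sstar (n i : ℤ) (hn : 0 < n) : (sstar n i).1 / n = -1 := by
  have hval : (sstar n i).1 = i % n - n := rfl
  rw [hval, ediv_sub_self n _ hn,
    Int.ediv_eq_zero_of_lt (Int.emod_nonneg i (ne_of_gt hn)) (Int.emod_lt_of_pos i hn)]
  ring

lemma Fco_sstar (n i : ℤ) (hn : 0 < n) (x : TT) : Fco n i (sstar n i) x = -x := by
  rw [Fco, ediv_sstar n i hn, if_neg (by decide), epsN_sstar n i hn, pow_zero]
  rfl

/-- The moving lemma, upward direction. -/
lemma ML_up (n i : ℤ) (hn : 0 < n) : ∀ m : ℕ, ∀ t : Idx n i,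
    t.1 = (sstar n i).1 + m * n → ∀ x : TT,
    DFinsupp.single t x + DFinsupp.single (sstar n i) (Fco n i t x)
      ∈ (Dneg n i).range := by
  intro m
  induction m with
  | zero =>
    intro t ht x
    have : t = sstar n i := Subtype.ext (by omega)
    subst this
    rw [Fco_sstar n i hn, ← DFinsupp.single_add, add_neg_cancel, DFinsupp.single_zero]
    exact zero_mem _
  | succ m ih =>
    intro t ht x
    set t' := idxSub n i t with ht'
    have ht'v : t'.1 = (sstar n i).1 + m * n := by simp [ht']; rw [ht]; push_cast; ring
    obtain ⟨y, hy⟩ := vT_surj t.1 x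
    have hD : Dneg n i (DFinsupp.single t y)
        = DFinsupp.single t x + DFinsupp.single t' (hT t.1 y) := by
      rw [Dneg_single, hy]
    have hkey : Fco n i t' (hT t.1 y) = -(Fco n i t x) := by
      rw [ht', P1 n i hn t y, hy]
    have hIH := ih t' ht'v (hT t.1 y)
    have hDmem : Dneg n i (DFinsupp.single t y) ∈ (Dneg n i).range := ⟨_, rfl⟩
    have := AddSubgroup.sub_mem _ hDmem hIH
    have heq : Dneg n i (DFinsupp.single t y)
        - (DFinsupp.single t' (hT t.1 y) + DFinsupp.single (sstar n i) (Fco n i t' (hT t.1 y)))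
        = DFinsupp.single t x + DFinsupp.single (sstar n i) (Fco n i t x) := by
      rw [hD, hkey, DFinsupp.single_neg]
      abel
    rwa [heq] at this

/-- The moving lemma, downward direction. -/
lemma ML_down (n i : ℤ) (hn : 0 < n) : ∀ m : ℕ, ∀ t : Idx n i,
    t.1 = (sstar n i).1 - m * n → ∀ x : TT,
    DFinsupp.single t x + DFinsupp.single (sstar n i) (Fco n i t x)
      ∈ (Dneg n i).range := by
  intro m
  induction m with
  | zero =>
    intro t ht x
    have : t = sstar n i := Subtype.ext (by omega)
    subst this
    rw [Fco_sstar n i hn, ← DFinsupp.single_add, add_neg_cancel, DFinsupp.single_zero]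
    exact zero_mem _
  | succ m ih =>
    intro t ht x
    set t' := idxAdd n i t with ht'
    have ht'v : t'.1 = (sstar n i).1 - m * n := by simp [ht']; rw [ht]; push_cast; ring
    obtain ⟨y, hy⟩ := hT_surj t'.1 x
    have hD : Dneg n i (DFinsupp.single t' y)
        = DFinsupp.single t' (vT t'.1 y) + DFinsupp.single t x := by
      rw [Dneg_single, hy, ht', idxSub_add]
    have hkey : Fco n i t x = -(Fco n i t' (vT t'.1 y)) := by
      have := P1 n i hn t' y
      rw [ht', idxSub_add] at this
      rw [← hy, this]
    have hIH := ih t' ht'v (vT t'.1 y)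
    have hDmem : Dneg n i (DFinsupp.single t' y) ∈ (Dneg n i).range := ⟨_, rfl⟩
    have := AddSubgroup.sub_mem _ hDmem hIH
    have heq : Dneg n i (DFinsupp.single t' y)
        - (DFinsupp.single t' (vT t'.1 y) + DFinsupp.single (sstar n i) (Fco n i t' (vT t'.1 y)))
        = DFinsupp.single t x + DFinsupp.single (sstar n i) (Fco n i t x) := by
      rw [hD, hkey, DFinsupp.single_neg]
      abel
    rwa [heq] at this

lemma ML (n i : ℤ) (hn : 0 < n) (t : Idx n i) (x : TT) :
    DFinsupp.single t x + DFinsupp.single (sstar n i) (Fco n i t x)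
      ∈ (Dneg n i).range := by
  have hdvd : n ∣ t.1 - (sstar n i).1 := by
    obtain ⟨c1, hc1⟩ := t.2
    obtain ⟨c2, hc2⟩ := (sstar n i).2
    refine ⟨c1 - c2, ?_⟩
    have : t.1 - (sstar n i).1 = (t.1 - i) - ((sstar n i).1 - i) := by ring
    rw [this, hc1, hc2]; ring
  obtain ⟨c, hc⟩ := hdvd
  rcases le_or_gt 0 c with hc0 | hc0
  · apply ML_up n i hn c.toNat t _ x
    have : ((c.toNat : ℤ)) = c := Int.toNat_of_nonneg hc0
    rw [show ((c.toNat : ℤ)) * n = n * c by rw [this]; ring] at *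
    omega
  · apply ML_down n i hn (-c).toNat t _ x
    have : (((-c).toNat : ℤ)) = -c := Int.toNat_of_nonneg (by omega)
    rw [show (((-c).toNat : ℤ)) * n = -(n * c) by rw [this]; ring] at *
    omega

lemma ML_full (n i : ℤ) (hn : 0 < n) (b : ABt n i) :
    b + DFinsupp.single (sstar n i) (FF n i b) ∈ (Dneg n i).range := by
  induction b using DFinsupp.induction with
  | h0 => simp only [map_zero, DFinsupp.single_zero, add_zero]; exact zero_mem _
  | ha t x f hf hx ih =>
    have hadd : (DFinsupp.single t x + f)
        + DFinsupp.single (sstar n i) (FF n i (DFinsupp.single t x + f))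
        = (DFinsupp.single t x + DFinsupp.single (sstar n i) (Fco n i t x))
          + (f + DFinsupp.single (sstar n i) (FF n i f)) := by
      rw [map_add, FF_single, DFinsupp.single_add]
      abel
    rw [hadd]
    exact AddSubgroup.add_mem _ (ML n i hn t x) ih

lemma FF_Dneg (n i : ℤ) (hn : 0 < n) : (FF n i).comp (Dneg n i) = 0 := by
  apply DFinsupp.addHom_ext; intro s x
  simp only [AddMonoidHom.comp_apply, AddMonoidHom.zero_apply]
  rw [Dneg_single, map_add, FF_single, FF_single, P1 n i hn s x]
  abel

lemma FF_surjective (n i : ℤ) (hn : 0 < n) : Function.Surjective (FF n i) := by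
  intro y
  exact ⟨DFinsupp.single (sstar n i) (-y), by rw [FF_single, Fco_sstar n i hn, neg_neg]⟩

lemma range_eq_ker (n i : ℤ) (hn : 0 < n) : (Dneg n i).range = (FF n i).ker := by
  ext b
  constructor
  · rintro ⟨a, rfl⟩
    rw [AddMonoidHom.mem_ker, ← AddMonoidHom.comp_apply, FF_Dneg n i hn]
    rfl
  · intro hb
    rw [AddMonoidHom.mem_ker] at hb
    have := ML_full n i hn b
    rwa [hb, DFinsupp.single_zero, add_zero] at this

lemma FF_UAB (n i : ℤ) : (FF n i).comp (UAB n i) = (UT : TT →+ TT).comp (FF n i) := by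
  apply DFinsupp.addHom_ext; intro t x
  show FF n i (UAB n i (DFinsupp.single t x)) = UT (FF n i (DFinsupp.single t x))
  rw [UAB_single, FF_single, FF_single, Fco_UT]

end Aux

/-- For every positive `n` and every `i`, the map `D⁺_{-n,i} : 𝔸⁺_i → 𝔹⁺_i` is injective and
its cokernel is isomorphic to `T` as a `ℤ[U]`-module. -/
theorem stmt5 (n i : ℤ) (hn : 0 < n) :
    Function.Injective (Dneg n i) ∧
    ∃ e : (ABt n i ⧸ AddMonoidHom.range (Dneg n i)) ≃+ TT,
      ∀ x : ABt n i,
        e (QuotientAddGroup.mk (UAB n i x)) = UT (e (QuotientAddGroup.mk x)) := by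
  refine ⟨Dneg_injective n i hn, ?_⟩
  refine ⟨(QuotientAddGroup.quotientAddEquivOfEq (range_eq_ker n i hn)).trans
    (QuotientAddGroup.quotientKerEquivOfSurjective (FF n i) (FF_surjective n i hn)), ?_⟩
  intro x
  have hmk : ∀ y : ABt n i,
      ((QuotientAddGroup.quotientAddEquivOfEq (range_eq_ker n i hn)).trans
        (QuotientAddGroup.quotientKerEquivOfSurjective (FF n i) (FF_surjective n i hn)))
        (QuotientAddGroup.mk y) = FF n i y := by
    intro y
    rfl
  rw [hmk, hmk]
  exact DFunLike.congr_fun (FF_UAB n i) x
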